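/- Fix an integer n ≥ 3. For every ε ∈ (0,1), the function v_ε satisfies: (i) ∫₀¹ v_ε(r)²·r^{n−3} dr = |log ε|/2; (ii) ∫₀¹ v_ε'(r)²·r^{n−1} dr = (n−2)²·|log ε|/8 + π²/(2|log ε|), where v_ε' is the derivative of v_ε (equal to 0 on (0,ε)); (iii) ∫_ε¹ v_ε''(r)²·r^{n+1} dr = n²(n−2)²·|log ε|/32 + π²(n²−2n+2)/(4|log ε|) + π⁴/(2|log ε|³), where v_ε'' is the second derivative of v_ε on (ε,1). -/

import Mathlib

open MeasureTheory Real Set Filter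

noncomputable section

/-- The test function `v_ε` in dimension `n`: zero on `[0,ε]` and
`r^{−(n−2)/2}·sin(π·log r / log ε)` on `(ε,1]`. -/
def vepsn (n : ℕ) (ε : ℝ) : ℝ → ℝ := fun r =>
  if r ≤ ε then 0
  else r ^ (-(((n : ℝ) - 2) / 2)) * Real.sin (π * Real.log r / Real.log ε)

namespace VepsnAux

def gfun (ω A B k : ℝ) : ℝ → ℝ := fun r =>
  r ^ k * (A * Real.sin (ω * Real.log r) + B * Real.cos (ω * Real.log r))

lemma hasDerivAt_gfun (ω A B k : ℝ) {r : ℝ} (hr : 0 < r) :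
    HasDerivAt (gfun ω A B k) (gfun ω (k * A - ω * B) (k * B + ω * A) (k - 1) r) r := by
  have hθ : HasDerivAt (fun r : ℝ => ω * Real.log r) (ω * r⁻¹) r :=
    (Real.hasDerivAt_log hr.ne').const_mul ω
  have hpow : HasDerivAt (fun r : ℝ => r ^ k) (k * r ^ (k - 1)) r :=
    Real.hasDerivAt_rpow_const (Or.inl hr.ne')
  have h := hpow.mul ((hθ.sin.const_mul A).add (hθ.cos.const_mul B))
  refine h.congr_deriv ?_
  have h1 : r ^ (k - 1) = r ^ k / r := by
    rw [Real.rpow_sub hr, Real.rpow_one]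
  simp only [gfun, h1, Pi.add_apply]
  field_simp
  ring

lemma pow_cancel {r : ℝ} (hr : 0 < r) {k : ℝ} {m : ℕ} (h : 2 * k + (m : ℝ) = -1)
    (X : ℝ) : (r ^ k * X) ^ 2 * r ^ m = X ^ 2 / r := by
  have h2 : (r ^ k) ^ 2 * r ^ m = 1 / r := by
    rw [← Real.rpow_natCast r m, ← Real.rpow_natCast (r ^ k) 2, ← Real.rpow_mul hr.le,
      ← Real.rpow_add hr]
    norm_num
    rw [show k * 2 + (m : ℝ) = -1 by linarith, Real.rpow_neg_one]
  calc (r ^ k * X) ^ 2 * r ^ m = X ^ 2 * ((r ^ k) ^ 2 * r ^ m) := by ring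
    _ = X ^ 2 / r := by rw [h2]; ring

lemma contOn (ω A B : ℝ) {s : Set ℝ} (hs : ∀ x ∈ s, x ≠ 0) :
    ContinuousOn (fun r => (A * Real.sin (ω * Real.log r) + B * Real.cos (ω * Real.log r)) ^ 2 / r) s := by
  have hlog : ContinuousOn Real.log s :=
    Real.continuousOn_log.mono (fun x hx => by simpa using hs x hx)
  have h1 : ContinuousOn (fun r => ω * Real.log r) s := continuousOn_const.mul hlog
  exact (((continuousOn_const.mul (Real.continuous_sin.comp_continuousOn h1)).add
    (continuousOn_const.mul (Real.continuous_cos.comp_continuousOn h1))).pow 2).div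
    continuousOn_id hs

lemma key_integral (ε : ℝ) (hε0 : 0 < ε) (hε1 : ε < 1) (A B : ℝ) :
    ∫ r in ε..1, (A * Real.sin (π / Real.log ε * Real.log r)
        + B * Real.cos (π / Real.log ε * Real.log r)) ^ 2 / r
      = (A ^ 2 + B ^ 2) / 2 * (-Real.log ε) := by
  have hLneg : Real.log ε < 0 := Real.log_neg hε0 hε1
  have hLne : Real.log ε ≠ 0 := hLneg.ne
  set L := Real.log ε with hLdef
  set ω := π / L with hωdef
  have hωL : ω * L = π := div_mul_cancel₀ π hLne
  have hωne : ω ≠ 0 := div_ne_zero Real.pi_ne_zero hLne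
  set G : ℝ → ℝ := fun r => (A^2+B^2)/2 * Real.log r
      - (A^2-B^2)/(4*ω) * Real.sin (2*(ω*Real.log r))
      - A*B/(2*ω) * Real.cos (2*(ω*Real.log r)) with hGdef
  have hG : ∀ r ∈ Set.uIcc ε 1, HasDerivAt G
      ((A * Real.sin (ω*Real.log r) + B*Real.cos (ω*Real.log r))^2 / r) r := by
    intro r hrm
    rw [Set.uIcc_of_le hε1.le] at hrm
    have hr : 0 < r := lt_of_lt_of_le hε0 hrm.1
    have hlog := Real.hasDerivAt_log hr.ne'
    have hθ : HasDerivAt (fun r : ℝ => 2*(ω*Real.log r)) (2*(ω*r⁻¹)) r :=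
      (hlog.const_mul ω).const_mul 2
    have h := (((hlog.const_mul ((A^2+B^2)/2))).sub
      (hθ.sin.const_mul ((A^2-B^2)/(4*ω)))).sub (hθ.cos.const_mul (A*B/(2*ω)))
    refine h.congr_deriv ?_
    have hpy := Real.sin_sq_add_cos_sq (ω * Real.log r)
    rw [Real.sin_two_mul, Real.cos_two_mul]
    have key : (A * Real.sin (ω*Real.log r) + B * Real.cos (ω*Real.log r))^2
        = (A^2+B^2)/2 - (A^2-B^2)/2*(2*Real.cos (ω*Real.log r)^2-1)
          + A*B*(2*Real.sin (ω*Real.log r)*Real.cos (ω*Real.log r)) := by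
      linear_combination A^2 * hpy
    rw [key]
    field_simp
    ring
  have hcont : ContinuousOn
      (fun r => (A * Real.sin (ω*Real.log r) + B*Real.cos (ω*Real.log r))^2 / r)
      (Set.uIcc ε 1) := by
    apply contOn
    intro x hx
    rw [Set.uIcc_of_le hε1.le] at hx
    exact (lt_of_lt_of_le hε0 hx.1).ne'
  have hint := intervalIntegral.integral_eq_sub_of_hasDerivAt hG hcont.intervalIntegrable
  rw [hint]
  have hGε : G ε = (A^2+B^2)/2 * L - A*B/(2*ω) := by
    simp only [hGdef, ← hLdef]
    rw [show 2*(ω*L) = 2*π by rw [hωL], Real.sin_two_pi, Real.cos_two_pi]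
    ring
  have hG1 : G 1 = - (A*B/(2*ω)) := by
    simp only [hGdef, Real.log_one, mul_zero, Real.sin_zero, Real.cos_zero]
    ring
  rw [hGε, hG1]
  ring


lemma vepsn_eq (n : ℕ) (ε : ℝ) {r : ℝ} (hr : ε < r) :
    vepsn n ε r = gfun (π / Real.log ε) 1 0 (-(((n : ℝ) - 2) / 2)) r := by
  simp only [vepsn, gfun, not_le.mpr hr, if_false, one_mul, zero_mul, add_zero]
  rw [mul_div_right_comm]

lemma deriv_vepsn_eq (n : ℕ) (ε : ℝ) (hε0 : 0 < ε) {r : ℝ} (hr : ε < r) :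
    deriv (vepsn n ε) r
      = gfun (π / Real.log ε) (-(((n : ℝ) - 2) / 2)) (π / Real.log ε)
          (-(((n : ℝ) - 2) / 2) - 1) r := by
  have hr0 : 0 < r := lt_trans hε0 hr
  have hev : vepsn n ε =ᶠ[nhds r] gfun (π / Real.log ε) 1 0 (-(((n : ℝ) - 2) / 2)) := by
    filter_upwards [Ioi_mem_nhds hr] with x hx
    exact vepsn_eq n ε hx
  rw [hev.deriv_eq, (hasDerivAt_gfun _ _ _ _ hr0).deriv]
  simp only [gfun]
  ring

lemma deriv_vepsn_zero (n : ℕ) (ε : ℝ) {r : ℝ} (hr : r < ε) :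
    deriv (vepsn n ε) r = 0 := by
  have hev : vepsn n ε =ᶠ[nhds r] (fun _ => 0) := by
    filter_upwards [Iio_mem_nhds hr] with x hx
    simp only [vepsn, if_pos (le_of_lt (Set.mem_Iio.mp hx))]
  rw [hev.deriv_eq, deriv_const]

lemma deriv2_vepsn_eq (n : ℕ) (ε : ℝ) (hε0 : 0 < ε) {r : ℝ} (hr : ε < r) :
    deriv (deriv (vepsn n ε)) r
      = gfun (π / Real.log ε)
          ((((n : ℝ) - 2) / 2) * ((((n : ℝ) - 2) / 2) + 1) - (π / Real.log ε) ^ 2)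
          (-(((n : ℝ) - 1)) * (π / Real.log ε))
          (-(((n : ℝ) - 2) / 2) - 2) r := by
  have hr0 : 0 < r := lt_trans hε0 hr
  have hev : deriv (vepsn n ε) =ᶠ[nhds r]
      gfun (π / Real.log ε) (-(((n : ℝ) - 2) / 2)) (π / Real.log ε)
        (-(((n : ℝ) - 2) / 2) - 1) := by
    filter_upwards [Ioi_mem_nhds hr] with x hx
    exact deriv_vepsn_eq n ε hε0 hx
  rw [hev.deriv_eq, (hasDerivAt_gfun _ _ _ _ hr0).deriv]
  simp only [gfun]
  ring_nf

end VepsnAux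

open VepsnAux

/-- Exact values of the weighted norms of `v_ε`:
`∫₀¹ v_ε² r^{n−3} = |log ε|/2`,
`∫₀¹ v_ε'² r^{n−1} = (n−2)²|log ε|/8 + π²/(2|log ε|)`, and
`∫_ε¹ v_ε''² r^{n+1} = n²(n−2)²|log ε|/32 + π²(n²−2n+2)/(4|log ε|) + π⁴/(2|log ε|³)`. -/
theorem vepsn_norms (n : ℕ) (hn : 3 ≤ n) (ε : ℝ) (hε : ε ∈ Set.Ioo (0:ℝ) 1) :
    (∫ r in (0:ℝ)..1, (vepsn n ε r) ^ 2 * r ^ (n - 3)) = |Real.log ε| / 2 ∧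
    (∫ r in (0:ℝ)..1, (deriv (vepsn n ε) r) ^ 2 * r ^ (n - 1))
      = ((n : ℝ) - 2) ^ 2 * |Real.log ε| / 8 + π ^ 2 / (2 * |Real.log ε|) ∧
    (∫ r in ε..1, (deriv (deriv (vepsn n ε)) r) ^ 2 * r ^ (n + 1))
      = (n : ℝ) ^ 2 * ((n : ℝ) - 2) ^ 2 * |Real.log ε| / 32
        + π ^ 2 * ((n : ℝ) ^ 2 - 2 * (n : ℝ) + 2) / (4 * |Real.log ε|)
        + π ^ 4 / (2 * |Real.log ε| ^ 3) := by
  obtain ⟨hε0, hε1⟩ := hε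
  have hLneg : Real.log ε < 0 := Real.log_neg hε0 hε1
  have hLne : Real.log ε ≠ 0 := hLneg.ne
  have hΙ : Set.uIoc ε 1 = Set.Ioc ε 1 := Set.uIoc_of_le hε1.le
  have hae : ∀ᵐ (x : ℝ), x ≠ ε := by
    refine (MeasureTheory.ae_iff).mpr ?_
    simpa using (measure_singleton ε : (volume : Measure ℝ) {ε} = 0)
  have hcast3 : ((n - 3 : ℕ) : ℝ) = (n : ℝ) - 3 := by
    rw [Nat.cast_sub hn]; norm_num
  have hcast1 : ((n - 1 : ℕ) : ℝ) = (n : ℝ) - 1 := by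
    rw [Nat.cast_sub (by omega)]; norm_num
  refine ⟨?_, ?_, ?_⟩
  · -- part (i)
    have heq : ∀ r ∈ Set.uIoc ε 1, (vepsn n ε r) ^ 2 * r ^ (n - 3)
        = ((1:ℝ) * Real.sin (π / Real.log ε * Real.log r)
            + 0 * Real.cos (π / Real.log ε * Real.log r)) ^ 2 / r := by
      intro r hr
      rw [hΙ] at hr
      have hr0 : 0 < r := lt_trans hε0 hr.1
      rw [vepsn_eq n ε hr.1]
      exact pow_cancel hr0 (by rw [hcast3]; ring) _
    have hi2 : IntervalIntegrable (fun r => (vepsn n ε r) ^ 2 * r ^ (n - 3)) volume ε 1 := by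
      refine ((contOn (π / Real.log ε) 1 0 ?_).intervalIntegrable).congr_ae ?_
      · intro x hx
        rw [Set.uIcc_of_le hε1.le] at hx
        exact (lt_of_lt_of_le hε0 hx.1).ne'
      · exact (ae_restrict_iff' measurableSet_uIoc).2
          (Eventually.of_forall (fun x hx => ((heq x hx).symm)))
    have hi1 : IntervalIntegrable (fun r => (vepsn n ε r) ^ 2 * r ^ (n - 3)) volume 0 ε := by
      refine (intervalIntegrable_const (c := (0:ℝ))).congr_ae ?_
      refine (ae_restrict_iff' measurableSet_uIoc).2 (Eventually.of_forall (fun x hx => ?_))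
      rw [Set.uIoc_of_le hε0.le] at hx
      simp [vepsn, if_pos hx.2]
    have h0 : (∫ r in (0:ℝ)..ε, (vepsn n ε r) ^ 2 * r ^ (n - 3)) = 0 := by
      rw [intervalIntegral.integral_congr (g := fun _ => (0:ℝ)) ?_]
      · simp
      · intro x hx
        rw [Set.uIcc_of_le hε0.le] at hx
        simp [vepsn, if_pos hx.2]
    have h1 : (∫ r in ε..1, (vepsn n ε r) ^ 2 * r ^ (n - 3))
        = ((1:ℝ) ^ 2 + 0 ^ 2) / 2 * (-Real.log ε) := by
      rw [intervalIntegral.integral_congr_ae (Eventually.of_forall heq)]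
      exact key_integral ε hε0 hε1 1 0
    rw [← intervalIntegral.integral_add_adjacent_intervals hi1 hi2, h0, h1,
      abs_of_neg hLneg]
    ring
  · -- part (ii)
    have heq : ∀ r ∈ Set.uIoc ε 1, (deriv (vepsn n ε) r) ^ 2 * r ^ (n - 1)
        = ((-(((n : ℝ) - 2) / 2)) * Real.sin (π / Real.log ε * Real.log r)
            + (π / Real.log ε) * Real.cos (π / Real.log ε * Real.log r)) ^ 2 / r := by
      intro r hr
      rw [hΙ] at hr
      have hr0 : 0 < r := lt_trans hε0 hr.1
      rw [deriv_vepsn_eq n ε hε0 hr.1]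
      exact pow_cancel hr0 (by rw [hcast1]; ring) _
    have hi2 : IntervalIntegrable (fun r => (deriv (vepsn n ε) r) ^ 2 * r ^ (n - 1)) volume ε 1 := by
      refine ((contOn (π / Real.log ε) (-(((n : ℝ) - 2) / 2)) (π / Real.log ε) ?_).intervalIntegrable).congr_ae ?_
      · intro x hx
        rw [Set.uIcc_of_le hε1.le] at hx
        exact (lt_of_lt_of_le hε0 hx.1).ne'
      · exact (ae_restrict_iff' measurableSet_uIoc).2
          (Eventually.of_forall (fun x hx => ((heq x hx).symm)))
    have hi1 : IntervalIntegrable (fun r => (deriv (vepsn n ε) r) ^ 2 * r ^ (n - 1)) volume 0 ε := by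
      refine (intervalIntegrable_const (c := (0:ℝ))).congr_ae ?_
      rw [Filter.EventuallyEq, ae_restrict_iff' measurableSet_uIoc]
      filter_upwards [hae] with x hx hmem
      rw [Set.uIoc_of_le hε0.le] at hmem
      rw [deriv_vepsn_zero n ε (lt_of_le_of_ne hmem.2 hx)]
      ring
    have h0 : (∫ r in (0:ℝ)..ε, (deriv (vepsn n ε) r) ^ 2 * r ^ (n - 1)) = 0 := by
      rw [intervalIntegral.integral_congr_ae (g := fun _ => (0:ℝ)) ?_]
      · simp
      · filter_upwards [hae] with x hx hmem
        rw [Set.uIoc_of_le hε0.le] at hmem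
        rw [deriv_vepsn_zero n ε (lt_of_le_of_ne hmem.2 hx)]
        ring
    have h1 : (∫ r in ε..1, (deriv (vepsn n ε) r) ^ 2 * r ^ (n - 1))
        = ((-(((n : ℝ) - 2) / 2)) ^ 2 + (π / Real.log ε) ^ 2) / 2 * (-Real.log ε) := by
      rw [intervalIntegral.integral_congr_ae (Eventually.of_forall heq)]
      exact key_integral ε hε0 hε1 _ _
    rw [← intervalIntegral.integral_add_adjacent_intervals hi1 hi2, h0, h1,
      abs_of_neg hLneg]
    field_simp [hLne]
    ring
  · -- part (iii)
    have heq : ∀ r ∈ Set.uIoc ε 1, (deriv (deriv (vepsn n ε)) r) ^ 2 * r ^ (n + 1)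
        = (((((n : ℝ) - 2) / 2) * ((((n : ℝ) - 2) / 2) + 1) - (π / Real.log ε) ^ 2)
              * Real.sin (π / Real.log ε * Real.log r)
            + (-(((n : ℝ) - 1)) * (π / Real.log ε))
              * Real.cos (π / Real.log ε * Real.log r)) ^ 2 / r := by
      intro r hr
      rw [hΙ] at hr
      have hr0 : 0 < r := lt_trans hε0 hr.1
      rw [deriv2_vepsn_eq n ε hε0 hr.1]
      exact pow_cancel hr0 (by push_cast; ring) _
    rw [intervalIntegral.integral_congr_ae (Eventually.of_forall heq),
      key_integral ε hε0 hε1 _ _, abs_of_neg hLneg]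
    field_simp [hLne]
    ring
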